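/- arXiv:0810.3814 — 5 statements merged into one kernel-verified Lean document; each statement's English description precedes it below -/
import Mathlib

section
/- Let U be unitary on a finite-dimensional complex Hilbert space, |0⟩ a unit vector, P an orthogonal projection, and set |Φ⟩ = U|0⟩, |Φ_g⟩ = P|Φ⟩, |Φ_b⟩ = (I−P)|Φ⟩, g = ⟨Φ_g|Φ_g⟩. For Q = −U P₀^{φ₁} U⁻¹ P_χ^{φ₂} (with the conditional phase operators P₀^{φ₁}, P_χ^{φ₂} as above), the action of Q on |Φ_g⟩ is Q|Φ_g⟩ = e^{iφ₂}((1−e^{iφ₁})g − 1)|Φ_g⟩ + e^{iφ₂}(1−e^{iφ₁})g |Φ_b⟩. -/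
/-- The rank-one orthogonal projection `|v⟩⟨v|`. -/
noncomputable def ketBra {H : Type*} [NormedAddCommGroup H] [InnerProductSpace ℂ H]
    (v : H) : H →L[ℂ] H :=
  (innerSL ℂ v).smulRight v

/-- `P₀^φ = I − (1 − e^{iφ})|0⟩⟨0|`. -/
noncomputable def condPhase0 {H : Type*} [NormedAddCommGroup H] [InnerProductSpace ℂ H]
    (v : H) (φ : ℝ) : H →L[ℂ] H :=
  1 - (1 - Complex.exp (φ * Complex.I)) • ketBra v

/-- `P_χ^φ = I − (1 − e^{iφ})P`. -/
noncomputable def condPhaseProj {H : Type*} [NormedAddCommGroup H] [InnerProductSpace ℂ H]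
    (P : H →L[ℂ] H) (φ : ℝ) : H →L[ℂ] H :=
  1 - (1 - Complex.exp (φ * Complex.I)) • P

/-- Action of the amplitude amplification operator `Q` on the good component:
`Q|Φ_g⟩ = e^{iφ₂}((1−e^{iφ₁})g − 1)|Φ_g⟩ + e^{iφ₂}(1−e^{iφ₁})g|Φ_b⟩`. -/
theorem Q_action_on_good
    {H : Type*} [NormedAddCommGroup H] [InnerProductSpace ℂ H] [FiniteDimensional ℂ H]
    (U : H →L[ℂ] H)
    (hU1 : ContinuousLinearMap.adjoint U ∘L U = 1)
    (hU2 : U ∘L ContinuousLinearMap.adjoint U = 1)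
    (v : H) (hv : ‖v‖ = 1)
    (P : H →L[ℂ] H) (hP2 : P ∘L P = P) (hPa : ContinuousLinearMap.adjoint P = P)
    (φ₁ φ₂ : ℝ)
    (Q : H →L[ℂ] H)
    (hQ : Q = -(U ∘L condPhase0 v φ₁ ∘L ContinuousLinearMap.adjoint U ∘L condPhaseProj P φ₂))
    (Φ Φg Φb : H) (hΦ : Φ = U v) (hΦg : Φg = P Φ) (hΦb : Φb = Φ - Φg)
    (g : ℂ) (hg : g = (‖Φg‖ ^ 2 : ℝ)) :
    Q Φg = (Complex.exp (φ₂ * Complex.I) * ((1 - Complex.exp (φ₁ * Complex.I)) * g - 1)) • Φg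
      + (Complex.exp (φ₂ * Complex.I) * (1 - Complex.exp (φ₁ * Complex.I)) * g) • Φb := by

  have hPΦg : P Φg = Φg := by
    rw [hΦg, ← ContinuousLinearMap.comp_apply, hP2]
  have hUUa : ∀ x : H, U (ContinuousLinearMap.adjoint U x) = x := by
    intro x
    have := congrArg (fun T : H →L[ℂ] H => T x) hU2
    simpa using this
  have hinner : (inner ℂ v (ContinuousLinearMap.adjoint U Φg) : ℂ) = g := by
    rw [ContinuousLinearMap.adjoint_inner_right, ← hΦ]
    calc (inner ℂ Φ Φg : ℂ) = inner ℂ Φ (P Φg) := by rw [hPΦg]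
      _ = inner ℂ (P Φ) Φg := by
          rw [← ContinuousLinearMap.adjoint_inner_left, hPa]
      _ = inner ℂ Φg Φg := by rw [← hΦg]
      _ = g := by
          rw [inner_self_eq_norm_sq_to_K, hg]; push_cast; norm_num
  set e₁ := Complex.exp (φ₁ * Complex.I)
  set e₂ := Complex.exp (φ₂ * Complex.I)
  have h1 : condPhaseProj P φ₂ Φg = e₂ • Φg := by
    simp only [condPhaseProj, ContinuousLinearMap.sub_apply,
      ContinuousLinearMap.smul_apply, ContinuousLinearMap.one_apply, hPΦg]
    module
  have h2 : (U ∘L condPhase0 v φ₁ ∘L ContinuousLinearMap.adjoint U) Φg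
      = Φg - ((1 - e₁) * g) • Φ := by
    simp only [ContinuousLinearMap.comp_apply, condPhase0, ketBra,
      ContinuousLinearMap.sub_apply, ContinuousLinearMap.smul_apply,
      ContinuousLinearMap.one_apply, ContinuousLinearMap.smulRight_apply,
      innerSL_apply_apply, hinner, map_sub, map_smul, hUUa, ← hΦ]
    module
  have hQΦg : Q Φg = -(e₂ • (Φg - ((1 - e₁) * g) • Φ)) := by
    rw [hQ]
    have : (U ∘L condPhase0 v φ₁ ∘L ContinuousLinearMap.adjoint U ∘L condPhaseProj P φ₂) Φg
        = (U ∘L condPhase0 v φ₁ ∘L ContinuousLinearMap.adjoint U) (condPhaseProj P φ₂ Φg) := by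
      simp [ContinuousLinearMap.comp_apply]
    rw [ContinuousLinearMap.neg_apply, this, h1, map_smul, h2, smul_sub, smul_smul]
  rw [hQΦg, hΦb]
  module
end

section
/- With the same setup (U unitary, |0⟩ unit vector, P orthogonal projection, |Φ⟩ = U|0⟩, |Φ_g⟩ = P|Φ⟩, |Φ_b⟩ = (I−P)|Φ⟩, g = ‖Φ_g‖²), the operator Q = −U P₀^{φ₁} U⁻¹ P_χ^{φ₂} satisfies Q|Φ_b⟩ = (1−e^{iφ₁})(1−g)|Φ_g⟩ − ((1−e^{iφ₁})g + e^{iφ₁})|Φ_b⟩. -/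
/-- Action of the amplitude amplification operator `Q` on the bad component:
`Q|Φ_b⟩ = (1−e^{iφ₁})(1−g)|Φ_g⟩ − ((1−e^{iφ₁})g + e^{iφ₁})|Φ_b⟩`. -/
theorem Q_action_on_bad
    {H : Type*} [NormedAddCommGroup H] [InnerProductSpace ℂ H] [FiniteDimensional ℂ H]
    (U : H →L[ℂ] H)
    (hU1 : ContinuousLinearMap.adjoint U ∘L U = 1)
    (hU2 : U ∘L ContinuousLinearMap.adjoint U = 1)
    (v : H) (hv : ‖v‖ = 1)
    (P : H →L[ℂ] H) (hP2 : P ∘L P = P) (hPa : ContinuousLinearMap.adjoint P = P)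
    (φ₁ φ₂ : ℝ)
    (Q : H →L[ℂ] H)
    (hQ : Q = -(U ∘L condPhase0 v φ₁ ∘L ContinuousLinearMap.adjoint U ∘L condPhaseProj P φ₂))
    (Φ Φg Φb : H) (hΦ : Φ = U v) (hΦg : Φg = P Φ) (hΦb : Φb = Φ - Φg)
    (g : ℂ) (hg : g = (‖Φg‖ ^ 2 : ℝ)) :
    Q Φb = ((1 - Complex.exp (φ₁ * Complex.I)) * (1 - g)) • Φg
      - ((1 - Complex.exp (φ₁ * Complex.I)) * g + Complex.exp (φ₁ * Complex.I)) • Φb := by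
  have hPb : P Φb = 0 := by
    rw [hΦb, hΦg, map_sub, ← ContinuousLinearMap.comp_apply, hP2, sub_self]
  have hUU : ∀ x, U ((ContinuousLinearMap.adjoint U) x) = x := fun x => by
    rw [← ContinuousLinearMap.comp_apply, hU2, ContinuousLinearMap.one_apply]
  have hΦΦ : (inner ℂ Φ Φ : ℂ) = 1 := by
    rw [hΦ, ← ContinuousLinearMap.adjoint_inner_right, ← ContinuousLinearMap.comp_apply, hU1,
      ContinuousLinearMap.one_apply, inner_self_eq_norm_sq_to_K, hv]
    norm_num
  have hPg : P Φg = Φg := by rw [hΦg, ← ContinuousLinearMap.comp_apply, hP2]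
  have hΦΦg : (inner ℂ Φ Φg : ℂ) = g := by
    calc (inner ℂ Φ Φg : ℂ) = inner ℂ Φ (P Φg) := by rw [hPg]
      _ = inner ℂ Φ ((ContinuousLinearMap.adjoint P) Φg) := by rw [hPa]
      _ = inner ℂ (P Φ) Φg := ContinuousLinearMap.adjoint_inner_right ..
      _ = inner ℂ Φg Φg := by rw [hΦg]
      _ = g := by rw [inner_self_eq_norm_sq_to_K, hg]; norm_cast
  have key : (inner ℂ v ((ContinuousLinearMap.adjoint U) Φb) : ℂ) = 1 - g := by
    rw [ContinuousLinearMap.adjoint_inner_right, ← hΦ, hΦb, inner_sub_right, hΦΦ, hΦΦg]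
  rw [hQ]
  simp only [ContinuousLinearMap.neg_apply, ContinuousLinearMap.comp_apply,
    condPhaseProj, condPhase0, ketBra, ContinuousLinearMap.sub_apply,
    ContinuousLinearMap.one_apply, ContinuousLinearMap.smul_apply,
    ContinuousLinearMap.smulRight_apply, innerSL_apply_apply, hPb, smul_zero, sub_zero]
  rw [key, map_sub, hUU, map_smul, map_smul, ← hΦ]
  have hΦs : Φ = Φg + Φb := by rw [hΦb]; abel
  rw [hΦs]
  module
end

section
/- With the setup above, Q|Φ⟩ = [(1−e^{iφ₁})(1 − g + g e^{iφ₂}) − e^{iφ₂}]|Φ_g⟩ + [g(1−e^{iφ₁})(e^{iφ₂}−1) − e^{iφ₁}]|Φ_b⟩, where |Φ⟩ = |Φ_g⟩ + |Φ_b⟩. -/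
open ContinuousLinearMap in
/-- Action of the amplitude amplification operator `Q` on `|Φ⟩ = |Φ_g⟩ + |Φ_b⟩`:
`Q|Φ⟩ = [(1−e^{iφ₁})(1 − g + g e^{iφ₂}) − e^{iφ₂}]|Φ_g⟩
       + [g(1−e^{iφ₁})(e^{iφ₂}−1) − e^{iφ₁}]|Φ_b⟩`. -/
theorem Q_action_on_Phi
    {H : Type*} [NormedAddCommGroup H] [InnerProductSpace ℂ H] [FiniteDimensional ℂ H]
    (U : H →L[ℂ] H)
    (hU1 : ContinuousLinearMap.adjoint U ∘L U = 1)
    (hU2 : U ∘L ContinuousLinearMap.adjoint U = 1)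
    (v : H) (hv : ‖v‖ = 1)
    (P : H →L[ℂ] H) (hP2 : P ∘L P = P) (hPa : ContinuousLinearMap.adjoint P = P)
    (φ₁ φ₂ : ℝ)
    (Q : H →L[ℂ] H)
    (hQ : Q = -(U ∘L condPhase0 v φ₁ ∘L ContinuousLinearMap.adjoint U ∘L condPhaseProj P φ₂))
    (Φ Φg Φb : H) (hΦ : Φ = U v) (hΦg : Φg = P Φ) (hΦb : Φb = Φ - Φg)
    (g : ℂ) (hg : g = (‖Φg‖ ^ 2 : ℝ)) :
    Q Φ = ((1 - Complex.exp (φ₁ * Complex.I)) * (1 - g + g * Complex.exp (φ₂ * Complex.I))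
            - Complex.exp (φ₂ * Complex.I)) • Φg
      + (g * (1 - Complex.exp (φ₁ * Complex.I)) * (Complex.exp (φ₂ * Complex.I) - 1)
            - Complex.exp (φ₁ * Complex.I)) • Φb := by
  set e1 := Complex.exp (φ₁ * Complex.I) with he1
  set e2 := Complex.exp (φ₂ * Complex.I) with he2
  have hUU : ∀ x, U (adjoint U x) = x := fun x => by
    have := congrFun (congrArg (DFunLike.coe) hU2) x
    simpa using this
  have hΦΦ : (inner ℂ Φ Φ : ℂ) = 1 := by
    rw [hΦ, ← adjoint_inner_left]
    have : adjoint U (U v) = v := by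
      have := congrFun (congrArg (DFunLike.coe) hU1) v
      simpa using this
    rw [this, inner_self_eq_norm_sq_to_K, hv]
    norm_num
  have hΦgΦg : (inner ℂ Φg Φg : ℂ) = g := by
    rw [inner_self_eq_norm_sq_to_K, hg]; norm_cast
  have hΦΦg : (inner ℂ Φ Φg : ℂ) = g := by
    have hPΦg : P Φg = Φg := by
      rw [hΦg, ← ContinuousLinearMap.comp_apply, hP2]
    calc (inner ℂ Φ Φg : ℂ) = inner ℂ Φ (adjoint P Φg) := by rw [hPa, hPΦg]
      _ = inner ℂ (P Φ) Φg := adjoint_inner_right P Φ Φg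
      _ = inner ℂ Φg Φg := by rw [← hΦg]
      _ = g := hΦgΦg
  have key1 : condPhaseProj P φ₂ Φ = Φ - (1 - e2) • Φg := by
    simp [condPhaseProj, hΦg, ContinuousLinearMap.sub_apply, ContinuousLinearMap.smul_apply, he2]
  have key2 : (inner ℂ v (adjoint U (Φ - (1 - e2) • Φg)) : ℂ) = 1 - (1 - e2) * g := by
    rw [adjoint_inner_right, ← hΦ, inner_sub_right, inner_smul_right, hΦΦ, hΦΦg]
  have key3 : condPhase0 v φ₁ (adjoint U (Φ - (1 - e2) • Φg))
      = adjoint U (Φ - (1 - e2) • Φg) - ((1 - e1) * (1 - (1 - e2) * g)) • v := by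
    simp only [condPhase0, ketBra, ContinuousLinearMap.sub_apply,
      ContinuousLinearMap.smul_apply, ContinuousLinearMap.one_apply,
      ContinuousLinearMap.smulRight_apply, innerSL_apply_apply, key2, smul_smul, he1]
  have hQΦ : Q Φ = -(U (condPhase0 v φ₁ (adjoint U (condPhaseProj P φ₂ Φ)))) := by
    rw [hQ]; rfl
  rw [hQΦ, key1, key3, map_sub, map_smul, hUU, ← hΦ]
  have hΦ' : Φ = Φg + Φb := by rw [hΦb]; abel
  rw [hΦ']
  match_scalars <;> ring
end

section
/- Amplitude Amplification Theorem: Let U be unitary on a finite-dimensional complex Hilbert space, |0⟩ a unit vector, P an orthogonal projection, |Φ⟩ = U|0⟩ with |Φ_g⟩ = P|Φ⟩, |Φ_b⟩ = (I−P)|Φ⟩, g = ‖Φ_g‖² ∈ (0,1), b = 1−g. Define θ ∈ (0, π/2) by sin²θ = g and Q = −U(I − 2|0⟩⟨0|)U⁻¹(I − 2P). Then for every integer L ≥ 0, Q^L U|0⟩ = (1/√g) sin((2L+1)θ) |Φ_g⟩ + (1/√b) cos((2L+1)θ) |Φ_b⟩. -/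
open scoped InnerProductSpace in
private lemma amp_sin (x θ : ℝ) (hs : Real.sin θ ≠ 0) (hc : Real.cos θ ≠ 0) :
    Real.sin (x + 2*θ)/Real.sin θ
      = (Real.sin x/Real.sin θ)*(1-2*Real.sin θ^2)
        + (Real.cos x/Real.cos θ)*(2*(1 - Real.sin θ^2)) := by
  have hpy := Real.sin_sq_add_cos_sq θ
  rw [Real.sin_add, Real.sin_two_mul, Real.cos_two_mul']
  field_simp
  linear_combination (Real.sin x * Real.cos θ + 2*Real.sin θ*Real.cos x) * hpy

private lemma amp_cos (x θ : ℝ) (hs : Real.sin θ ≠ 0) (hc : Real.cos θ ≠ 0) :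
    Real.cos (x + 2*θ)/Real.cos θ
      = (Real.sin x/Real.sin θ)*(-(2*Real.sin θ^2))
        + (Real.cos x/Real.cos θ)*(2*(1 - Real.sin θ^2)-1) := by
  have hpy := Real.sin_sq_add_cos_sq θ
  rw [Real.cos_add, Real.sin_two_mul, Real.cos_two_mul']
  field_simp
  linear_combination (Real.cos x) * hpy

open scoped InnerProductSpace

/-- **Amplitude amplification theorem.** With `Q = −U(I − 2|0⟩⟨0|)U⁻¹(I − 2P)`,
`|Φ⟩ = U|0⟩`, `|Φ_g⟩ = P|Φ⟩`, `|Φ_b⟩ = (I−P)|Φ⟩`, `g = ‖Φ_g‖² ∈ (0,1)`, `b = 1−g`,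
and `θ ∈ (0, π/2)` with `sin²θ = g`, for every `L ≥ 0`:
`Q^L U|0⟩ = (1/√g) sin((2L+1)θ)|Φ_g⟩ + (1/√b) cos((2L+1)θ)|Φ_b⟩`. -/
theorem amplitude_amplification
    {H : Type*} [NormedAddCommGroup H] [InnerProductSpace ℂ H] [FiniteDimensional ℂ H]
    (U : H →L[ℂ] H)
    (hU1 : ContinuousLinearMap.adjoint U ∘L U = 1)
    (hU2 : U ∘L ContinuousLinearMap.adjoint U = 1)
    (v : H) (hv : ‖v‖ = 1)
    (P : H →L[ℂ] H) (hP2 : P ∘L P = P) (hPa : ContinuousLinearMap.adjoint P = P)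
    (Q : H →L[ℂ] H)
    (hQ : Q = -(U ∘L (1 - (2 : ℂ) • ketBra v) ∘L ContinuousLinearMap.adjoint U
                ∘L (1 - (2 : ℂ) • P)))
    (Φ Φg Φb : H) (hΦ : Φ = U v) (hΦg : Φg = P Φ) (hΦb : Φb = Φ - Φg)
    (g b : ℝ) (hg : g = ‖Φg‖ ^ 2) (hg0 : 0 < g) (hg1 : g < 1) (hb : b = 1 - g)
    (θ : ℝ) (hθ : θ ∈ Set.Ioo 0 (Real.pi / 2)) (hsin : Real.sin θ ^ 2 = g)
    (L : ℕ) :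
    (Q ^ L) (U v)
      = ((Real.sin ((2 * L + 1) * θ) / Real.sqrt g : ℝ) : ℂ) • Φg
        + ((Real.cos ((2 * L + 1) * θ) / Real.sqrt b : ℝ) : ℂ) • Φb := by
  have pi_pos := Real.pi_pos
  have hsθ : 0 < Real.sin θ := Real.sin_pos_of_pos_of_lt_pi hθ.1 (by linarith [hθ.2])
  have hcθ : 0 < Real.cos θ := Real.cos_pos_of_mem_Ioo ⟨by linarith [hθ.1], hθ.2⟩
  have hsg : Real.sqrt g = Real.sin θ := by rw [← hsin, Real.sqrt_sq hsθ.le]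
  have hbcos : b = 1 - Real.sin θ ^ 2 := by rw [hb, hsin]
  have hsb : Real.sqrt b = Real.cos θ := by
    rw [hbcos, ← Real.cos_sq', Real.sqrt_sq hcθ.le]
  -- projection facts
  have hPΦg : P Φg = Φg := by
    rw [hΦg, ← ContinuousLinearMap.comp_apply, hP2]
  have hPΦb : P Φb = 0 := by
    rw [hΦb, map_sub, hPΦg, ← hΦg, sub_self]
  have hsum : Φ = Φg + Φb := by rw [hΦb]; abel
  -- inner products
  have hΦΦ : ⟪Φ, Φ⟫_ℂ = 1 := by
    rw [hΦ, ← ContinuousLinearMap.adjoint_inner_right, ← ContinuousLinearMap.comp_apply,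
      hU1, ContinuousLinearMap.one_apply, inner_self_eq_norm_sq_to_K, hv]
    norm_num
  have hgΦ : ⟪Φ, Φg⟫_ℂ = (g : ℂ) := by
    rw [← hPΦg, ← ContinuousLinearMap.adjoint_inner_left, hPa, ← hΦg,
      inner_self_eq_norm_sq_to_K, hg]
    norm_cast
  have hbΦ : ⟪Φ, Φb⟫_ℂ = (b : ℂ) := by
    rw [hΦb, inner_sub_right, hΦΦ, hgΦ, hb]
    push_cast
    ring
  -- action of Q
  have hUU : ∀ z : H, U (ContinuousLinearMap.adjoint U z) = z := by
    intro z
    have := congrArg (fun A : H →L[ℂ] H => A z) hU2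
    simpa using this
  have hQapp : ∀ x : H,
      Q x = ((2 : ℂ) * ⟪Φ, x - (2 : ℂ) • P x⟫_ℂ) • Φ - (x - (2 : ℂ) • P x) := by
    intro x
    rw [hQ]
    have hk : ∀ z : H, (1 - (2:ℂ) • ketBra v) z = z - ((2:ℂ) * ⟪v, z⟫_ℂ) • v := by
      intro z
      simp [ketBra, ContinuousLinearMap.sub_apply, ContinuousLinearMap.smul_apply,
        mul_smul]
    have hyx : (1 - (2:ℂ) • P) x = x - (2:ℂ) • P x := by
      simp [ContinuousLinearMap.sub_apply, ContinuousLinearMap.smul_apply]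
    rw [ContinuousLinearMap.neg_apply, ContinuousLinearMap.comp_apply,
      ContinuousLinearMap.comp_apply, ContinuousLinearMap.comp_apply, hk,
      map_sub, map_smul, hUU, ContinuousLinearMap.adjoint_inner_right, ← hΦ, hyx]
    module
  have hQg : Q Φg = ((1 - 2*g : ℝ) : ℂ) • Φg - ((2*g : ℝ) : ℂ) • Φb := by
    rw [hQapp Φg, hPΦg]
    have hy : Φg - (2 : ℂ) • Φg = -Φg := by module
    rw [hy, inner_neg_right, hgΦ, hsum]
    push_cast
    module
  have hQb : Q Φb = ((2*b : ℝ) : ℂ) • Φg + ((2*b - 1 : ℝ) : ℂ) • Φb := by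
    rw [hQapp Φb, hPΦb]
    rw [smul_zero, sub_zero, hbΦ, hsum]
    push_cast
    module
  induction L with
  | zero =>
    have harg : (2 * ((0:ℕ):ℝ) + 1) * θ = θ := by norm_num
    rw [pow_zero, ContinuousLinearMap.one_apply, harg, hsg, hsb,
      div_self hsθ.ne', div_self hcθ.ne', ← hΦ]
    push_cast
    rw [one_smul, one_smul, hsum]
  | succ n ih =>
    have harg : (2 * ((n+1:ℕ):ℝ) + 1) * θ = (2 * (n:ℝ) + 1) * θ + 2 * θ := by
      push_cast; ring
    set x := (2 * (n:ℝ) + 1) * θ with hx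
    have hA : Real.sin (x + 2*θ) / Real.sqrt g
        = (Real.sin x / Real.sqrt g) * (1 - 2*g)
          + (Real.cos x / Real.sqrt b) * (2*b) := by
      rw [hsg, hsb, ← hsin, hbcos]
      exact amp_sin x θ hsθ.ne' hcθ.ne'
    have hB : Real.cos (x + 2*θ) / Real.sqrt b
        = (Real.sin x / Real.sqrt g) * (-(2*g))
          + (Real.cos x / Real.sqrt b) * (2*b - 1) := by
      rw [hsg, hsb, ← hsin, hbcos]
      exact amp_cos x θ hsθ.ne' hcθ.ne'
    rw [pow_succ', ContinuousLinearMap.mul_apply, ih, map_add, map_smul, map_smul,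
      hQg, hQb, harg]
    rw [show ((Real.sin (x + 2*θ) / Real.sqrt g : ℝ) : ℂ)
        = ((Real.sin x / Real.sqrt g : ℝ) : ℂ) * ((1 - 2*g : ℝ) : ℂ)
          + ((Real.cos x / Real.sqrt b : ℝ) : ℂ) * ((2*b : ℝ) : ℂ) by
      rw [← Complex.ofReal_mul, ← Complex.ofReal_mul, ← Complex.ofReal_add]
      exact_mod_cast congrArg Complex.ofReal hA]
    rw [show ((Real.cos (x + 2*θ) / Real.sqrt b : ℝ) : ℂ)
        = ((Real.sin x / Real.sqrt g : ℝ) : ℂ) * (-((2*g : ℝ) : ℂ))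
          + ((Real.cos x / Real.sqrt b : ℝ) : ℂ) * ((2*b - 1 : ℝ) : ℂ) by
      rw [← Complex.ofReal_neg, ← Complex.ofReal_mul, ← Complex.ofReal_mul,
        ← Complex.ofReal_add]
      exact_mod_cast congrArg Complex.ofReal hB]
    module
end

section
/- If 0 < g ≤ 1 and θ ∈ (0, π/2] satisfies sin²θ = g, then choosing L = ⌊π/(4θ)⌋ gives a success probability sin²((2L+1)θ) ≥ 1 − g. In particular if g ≤ 1/2 the amplified success probability is at least 1/2. -/
/-- If `0 < g ≤ 1` and `θ ∈ (0, π/2]` with `sin²θ = g`, then `L = ⌊π/(4θ)⌋` iterations of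
amplitude amplification give success probability `sin²((2L+1)θ) ≥ 1 − g`; in particular if
`g ≤ 1/2` the amplified success probability is at least `1/2`. -/
theorem amplitude_amplification_success_bound
    (g θ : ℝ) (hg0 : 0 < g) (hg1 : g ≤ 1)
    (hθ : θ ∈ Set.Ioc 0 (Real.pi / 2)) (hsin : Real.sin θ ^ 2 = g)
    (L : ℕ) (hL : L = ⌊Real.pi / (4 * θ)⌋₊) :
    Real.sin ((2 * L + 1) * θ) ^ 2 ≥ 1 - g ∧
      (g ≤ 1 / 2 → Real.sin ((2 * L + 1) * θ) ^ 2 ≥ 1 / 2) := by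
  obtain ⟨hθ0, hθ2⟩ := hθ
  have h4θ : (0:ℝ) < 4 * θ := by linarith
  have hfloor_le : (L : ℝ) ≤ Real.pi / (4 * θ) := by
    rw [hL]; exact Nat.floor_le (by positivity)
  have hfloor_gt : Real.pi / (4 * θ) < (L : ℝ) + 1 := by
    rw [hL]; exact Nat.lt_floor_add_one _
  have hub : (2 * (L:ℝ) + 1) * θ ≤ Real.pi / 2 + θ := by
    have := (le_div_iff₀ h4θ).mp hfloor_le
    nlinarith
  have hlb : Real.pi / 2 - θ < (2 * (L:ℝ) + 1) * θ := by
    have := (div_lt_iff₀ h4θ).mp hfloor_gt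
    nlinarith
  have habs : |Real.pi / 2 - (2 * (L:ℝ) + 1) * θ| ≤ θ := by
    rw [abs_le]; constructor <;> linarith
  have hcos : Real.cos θ ≤ Real.cos |Real.pi / 2 - (2 * (L:ℝ) + 1) * θ| := by
    apply Real.cos_le_cos_of_nonneg_of_le_pi (abs_nonneg _)
    · linarith [Real.pi_pos]
    · exact habs
  have hkey : Real.cos θ ≤ Real.sin ((2 * (L:ℝ) + 1) * θ) := by
    rw [Real.cos_abs, Real.cos_pi_div_two_sub] at hcos
    exact_mod_cast hcos
  have hcos0 : 0 ≤ Real.cos θ := Real.cos_nonneg_of_mem_Icc ⟨by linarith, hθ2⟩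
  have hsq : Real.cos θ ^ 2 ≤ Real.sin ((2 * (L:ℝ) + 1) * θ) ^ 2 :=
    pow_le_pow_left₀ hcos0 hkey 2
  have hcossq : Real.cos θ ^ 2 = 1 - g := by
    have := Real.sin_sq_add_cos_sq θ
    linarith
  have h1 : Real.sin ((2 * (L:ℝ) + 1) * θ) ^ 2 ≥ 1 - g := by
    rw [← hcossq]; exact hsq
  exact ⟨h1, fun hg => by linarith⟩
end
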